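/- arXiv:1207.2382 — 3 statements merged into one kernel-verified Lean document; each statement's English description precedes it below -/
import Mathlib

section
/- Let r ≥ 1, D ≥ 1, and let V be a ℂ-linear subspace of the space of homogeneous polynomials of degree D in MvPolynomial (Fin (r+1)) ℂ containing at least one nonzero element. If the common projective zero locus Z of V in ℙ^r(ℂ) is finite, then there exist f_1, …, f_r ∈ V whose common projective zero locus is finite and contains Z. -/
open MvPolynomial

/-- The projective zero locus in `ℙ^r(ℂ)` of a homogeneous polynomial
`f ∈ ℂ[x_0, …, x_r]`: the set of points all of whose nonzero representatives
annihilate `f`. -/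
def projZeroLocus (r : ℕ) (f : MvPolynomial (Fin (r+1)) ℂ) :
    Set (Projectivization ℂ (Fin (r+1) → ℂ)) :=
  {x | ∀ (v : Fin (r+1) → ℂ) (hv : v ≠ 0),
    Projectivization.mk ℂ v hv = x → MvPolynomial.eval v f = 0}

section Aux

noncomputable section

variable {n : ℕ}

lemma eval_smul_of_isHomogeneous {f : MvPolynomial (Fin n) ℂ} {e : ℕ}
    (hf : f.IsHomogeneous e) (t : ℂ) (v : Fin n → ℂ) :
    eval (t • v) f = t ^ e * eval v f := by
  rw [eval_eq', eval_eq', Finset.mul_sum]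
  apply Finset.sum_congr rfl
  intro d hd
  have hdeg : d.degree = e := by
    by_contra h; exact (mem_support_iff.mp hd) (hf.coeff_eq_zero h)
  have hsum : ∑ j, d j = e := by
    rw [← hdeg, Finsupp.degree]
    exact (Finset.sum_subset (Finset.subset_univ _)
      (fun x _ hx => Finsupp.notMem_support_iff.mp hx)).symm
  have : ∏ j, (t • v) j ^ d j = t ^ e * ∏ j, v j ^ d j := by
    simp only [Pi.smul_apply, smul_eq_mul, mul_pow]
    rw [Finset.prod_mul_distrib, Finset.prod_pow_eq_pow_sum, hsum]
  rw [this]; ring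

end

noncomputable section

variable {n : ℕ}

lemma hc_mul {t : MvPolynomial (Fin n) ℂ} {e : ℕ} (ht : t.IsHomogeneous e)
    (a : MvPolynomial (Fin n) ℂ) (d : ℕ) :
    homogeneousComponent d (a * t) =
      if e ≤ d then homogeneousComponent (d - e) a * t else 0 := by
  conv_lhs => rw [← sum_homogeneousComponent a]
  rw [Finset.sum_mul, map_sum]
  have key : ∀ k, homogeneousComponent d (homogeneousComponent k a * t)
      = if d = k + e then homogeneousComponent k a * t else 0 := fun k =>
    homogeneousComponent_of_mem ((homogeneousComponent_isHomogeneous k a).mul ht)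
  simp_rw [key]
  by_cases hed : e ≤ d
  · have hcond : ∀ x : ℕ, (d = x + e) = (x = d - e) := fun x => propext (by omega)
    simp_rw [hcond]
    rw [Finset.sum_ite_eq' (Finset.range (a.totalDegree + 1)) (d - e)
      (fun x => homogeneousComponent x a * t), if_pos hed]
    by_cases hmem : d - e ∈ Finset.range (a.totalDegree + 1)
    · rw [if_pos hmem]
    · rw [if_neg hmem, homogeneousComponent_eq_zero _ a (by
        simp only [Finset.mem_range, not_lt] at hmem; omega), zero_mul]
  · rw [if_neg hed]
    apply Finset.sum_eq_zero
    intro x _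
    rw [if_neg (by omega)]

end

noncomputable section

variable {n : ℕ}

lemma hc_mem_span {T : Set (MvPolynomial (Fin n) ℂ)}
    (hT : ∀ p ∈ T, ∃ e, p.IsHomogeneous e)
    {f : MvPolynomial (Fin n) ℂ} (hf : f ∈ Ideal.span T) (d : ℕ) :
    homogeneousComponent d f ∈ Ideal.span T := by
  induction hf using Submodule.span_induction generalizing d with
  | mem x hx =>
    obtain ⟨e, he⟩ := hT x hx
    rw [homogeneousComponent_of_mem he]
    split
    · exact Ideal.subset_span hx
    · exact (Ideal.span T).zero_mem
  | zero => simp only [map_zero]; exact (Ideal.span T).zero_mem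
  | add x y _ _ hx hy => rw [map_add]; exact (Ideal.span T).add_mem (hx d) (hy d)
  | smul a x _ hx =>
    rw [smul_eq_mul]
    rw [show a * x = ∑ k ∈ Finset.range (x.totalDegree + 1),
      a * homogeneousComponent k x by rw [← Finset.mul_sum, sum_homogeneousComponent],
      map_sum]
    apply Ideal.sum_mem
    intro k _
    rw [hc_mul (homogeneousComponent_isHomogeneous k x) a d]
    split
    · exact Ideal.mul_mem_left _ _ (hx k)
    · exact (Ideal.span T).zero_mem

lemma mem_of_degree_ge {J : Ideal (MvPolynomial (Fin n) ℂ)} {N : ℕ}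
    (hXN : ∀ i, (X i : MvPolynomial (Fin n) ℂ) ^ N ∈ J)
    {f : MvPolynomial (Fin n) ℂ} {d : ℕ} (hf : f.IsHomogeneous d)
    (hd : n * (N - 1) + 1 ≤ d) : f ∈ J := by
  nth_rewrite 1 [f.as_sum]
  apply Ideal.sum_mem
  intro α hα
  have hdeg : α.degree = d := by
    by_contra h; exact (mem_support_iff.mp hα) (hf.coeff_eq_zero h)
  have hsum : ∑ j, α j = d := by
    rw [← hdeg, Finsupp.degree]
    exact (Finset.sum_subset (Finset.subset_univ _)
      (fun x _ hx => Finsupp.notMem_support_iff.mp hx)).symm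
  have hex : ∃ i, N ≤ α i := by
    by_contra h
    push_neg at h
    have : ∑ j, α j ≤ ∑ _j : Fin n, (N - 1) :=
      Finset.sum_le_sum (fun j _ => by have := h j; omega)
    simp only [Finset.sum_const, Finset.card_univ, Fintype.card_fin, smul_eq_mul] at this
    omega
  obtain ⟨i, hi⟩ := hex
  have hadd : Finsupp.single i N + (α - Finsupp.single i N) = α := by
    ext j
    by_cases hj : j = i
    · subst hj
      simp only [Finsupp.add_apply, Finsupp.tsub_apply, Finsupp.single_apply,
        eq_self_iff_true, if_true]
      omega
    · simp [Finsupp.add_apply, Finsupp.tsub_apply, Finsupp.single_apply, Ne.symm hj]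
  have hmono : monomial α (coeff α f) =
      X i ^ N * monomial (α - Finsupp.single i N) (coeff α f) := by
    rw [X_pow_eq_monomial, monomial_mul, one_mul, hadd]
  rw [hmono]
  exact Ideal.mul_mem_right _ _ (hXN i)

end

noncomputable section

variable {n : ℕ}

lemma descent {T : Set (MvPolynomial (Fin n) ℂ)} (hT : ∀ p ∈ T, ∃ e, p.IsHomogeneous e)
    {L : MvPolynomial (Fin n) ℂ} (hL : L.IsHomogeneous 1) {N : ℕ}
    (hXN : ∀ i, (X i : MvPolynomial (Fin n) ℂ) ^ N ∈ Ideal.span (T ∪ {L})) :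
    ∀ (e : ℕ) (f : MvPolynomial (Fin n) ℂ), f.IsHomogeneous (n * (N - 1) + 1 + e) →
      ∃ h : MvPolynomial (Fin n) ℂ, h.IsHomogeneous (n * (N - 1) + 1) ∧
        f - L ^ e * h ∈ Ideal.span T := by
  set M := n * (N - 1) + 1 with hM
  intro e
  induction e with
  | zero =>
    intro f hf
    exact ⟨f, by simpa using hf, by rw [pow_zero, one_mul, sub_self]; exact zero_mem _⟩
  | succ e ih =>
    intro f hf
    set d := M + (e + 1) with hd
    have hfJ : f ∈ Ideal.span (T ∪ {L}) := mem_of_degree_ge hXN hf (by omega)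
    rw [Ideal.span_union, Submodule.mem_sup] at hfJ
    obtain ⟨u, hu, w, hw, huw⟩ := hfJ
    obtain ⟨b, hb⟩ := Ideal.mem_span_singleton'.mp hw
    have hfc : homogeneousComponent d f = f :=
      by rw [homogeneousComponent_of_mem hf, if_pos rfl]
    have hf2 : f = homogeneousComponent d u + homogeneousComponent (d - 1) b * L := by
      rw [← hfc]
      nth_rewrite 1 [← huw, ← hb]
      rw [map_add, hc_mul hL b d, if_pos (by omega)]
    have hb1 : (homogeneousComponent (d - 1) b).IsHomogeneous (M + e) := by
      have := homogeneousComponent_isHomogeneous (d - 1) b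
      rwa [show d - 1 = M + e by omega] at this
    obtain ⟨h, hh1, hh2⟩ := ih (homogeneousComponent (d - 1) b) hb1
    refine ⟨h, hh1, ?_⟩
    have hmem := Ideal.add_mem _ (hc_mem_span hT hu d)
      (Ideal.mul_mem_left _ L hh2)
    convert hmem using 1
    rw [hf2]
    ring

end

noncomputable section

variable {n : ℕ}

lemma sep_linear {w w' : Fin n → ℂ} (hw : w ≠ 0)
    (hprop : ∀ t : ℂ, w' ≠ t • w) :
    ∃ q : MvPolynomial (Fin n) ℂ, q.IsHomogeneous 1 ∧ eval w q = 0 ∧ eval w' q ≠ 0 := by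
  obtain ⟨i0, hi0⟩ : ∃ i, w i ≠ 0 := by
    by_contra h; push_neg at h; exact hw (funext h)
  have hex : ∃ l, w i0 * w' l - w l * w' i0 ≠ 0 := by
    by_contra h
    push_neg at h
    apply hprop (w' i0 / w i0)
    funext l
    have := h l
    rw [Pi.smul_apply, smul_eq_mul, div_mul_eq_mul_div, eq_div_iff hi0]
    linear_combination this
  obtain ⟨l, hl⟩ := hex
  refine ⟨C (w i0) * X l - C (w l) * X i0,
    ((isHomogeneous_X ℂ l).C_mul _).sub ((isHomogeneous_X ℂ i0).C_mul _), ?_, ?_⟩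
  · simp; ring
  · simpa using fun hc => hl (by linear_combination hc)

end

noncomputable section

open Polynomial in
lemma exists_avoid {ι : Type*} (s : Finset ι) (p : ι → Polynomial ℂ)
    (hp : ∀ j ∈ s, p j ≠ 0) : ∃ c : ℂ, ∀ j ∈ s, (p j).eval c ≠ 0 := by
  have hfin : (⋃ j ∈ s, {c : ℂ | (p j).IsRoot c}).Finite :=
    Set.Finite.biUnion s.finite_toSet (fun j hj => Polynomial.finite_setOf_isRoot (hp j hj))
  obtain ⟨c, hc⟩ := hfin.infinite_compl.nonempty
  refine ⟨c, fun j hj h => hc ?_⟩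
  exact Set.mem_biUnion hj h

lemma coeff_sum_CXpow {m : ℕ} (a : Fin m → ℂ) (j : Fin m) :
    (∑ i, Polynomial.C (a i) * Polynomial.X ^ (i : ℕ)).coeff (j : ℕ) = a j := by
  rw [Polynomial.finset_sum_coeff]
  have key : ∀ i : Fin m, (Polynomial.C (a i) * Polynomial.X ^ (i : ℕ)).coeff (j : ℕ)
      = if i = j then a i else 0 := by
    intro i
    rw [Polynomial.coeff_C_mul, Polynomial.coeff_X_pow]
    by_cases h : i = j
    · subst h; simp
    · rw [if_neg (fun hc => h (Fin.val_inj.mp hc.symm)), if_neg h, mul_zero]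
  simp_rw [key]
  rw [Finset.sum_ite_eq' Finset.univ j, if_pos (Finset.mem_univ j)]

variable {n : ℕ}

/-- evaluation at a point, as a linear map -/
def evalLin (v : Fin n → ℂ) : MvPolynomial (Fin n) ℂ →ₗ[ℂ] ℂ where
  toFun p := eval v p
  map_add' p q := by simp
  map_smul' c p := by simp only [smul_eq_C_mul, RingHom.id_apply, map_mul, eval_C, smul_eq_mul]

@[simp] lemma evalLin_apply (v : Fin n → ℂ) (p : MvPolynomial (Fin n) ℂ) :
    evalLin v p = eval v p := rfl

/-- the linear polynomial associated to a linear functional -/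
def phiPoly (φ : (Fin n → ℂ) →ₗ[ℂ] ℂ) : MvPolynomial (Fin n) ℂ :=
  ∑ i, C (φ (Pi.single i 1)) * X i

lemma phiPoly_isHomogeneous (φ : (Fin n → ℂ) →ₗ[ℂ] ℂ) : (phiPoly φ).IsHomogeneous 1 :=
  IsHomogeneous.sum _ _ _ fun i _ => (isHomogeneous_X ℂ i).C_mul _

lemma eval_phiPoly (φ : (Fin n → ℂ) →ₗ[ℂ] ℂ) (v : Fin n → ℂ) :
    eval v (phiPoly φ) = φ v := by
  have hv : v = ∑ i, v i • (Pi.single i (1 : ℂ) : Fin n → ℂ) := by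
    funext j
    simp [Finset.sum_apply, Pi.single_apply]
  rw [phiPoly, map_sum]
  conv_rhs => rw [hv]
  rw [map_sum]
  apply Finset.sum_congr rfl
  intro i _
  rw [map_smul]
  simp [mul_comm]

end

noncomputable section

variable {n : ℕ}

instance homogeneousSubmodule_fd (M : ℕ) :
    FiniteDimensional ℂ (homogeneousSubmodule (Fin n) ℂ M) := by
  apply Submodule.finiteDimensional_of_le (S₂ := restrictTotalDegree (Fin n) ℂ M)
  intro p hp
  rw [mem_restrictTotalDegree]
  exact ((mem_homogeneousSubmodule M p).mp hp).totalDegree_le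

lemma finiteCut (T : Set (MvPolynomial (Fin n) ℂ))
    (hT : ∀ p ∈ T, ∃ e, p.IsHomogeneous e)
    {L : MvPolynomial (Fin n) ℂ} (hL : L.IsHomogeneous 1)
    (hcap : ∀ v : Fin n → ℂ, (∀ p ∈ T, eval v p = 0) → eval v L = 0 → v = 0) :
    {x : Projectivization ℂ (Fin n → ℂ) | ∀ p ∈ T, eval x.rep p = 0}.Finite := by
  classical
  set I : Ideal (MvPolynomial (Fin n) ℂ) := Ideal.span (T ∪ {L}) with hI
  have hzl : MvPolynomial.zeroLocus ℂ I ⊆ {0} := by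
    intro v hv
    rw [mem_zeroLocus_iff] at hv
    have h1 : ∀ p ∈ T, eval v p = 0 := fun p hp =>
      hv p (Ideal.subset_span (Set.mem_union_left _ hp))
    have h2 : eval v L = 0 :=
      hv L (Ideal.subset_span (Set.mem_union_right _ rfl))
    exact hcap v h1 h2
  have hrad : ∀ i, (X i : MvPolynomial (Fin n) ℂ) ∈ I.radical := by
    intro i
    rw [← vanishingIdeal_zeroLocus_eq_radical (K := ℂ)]
    intro v hv
    have : v = 0 := hzl hv
    subst this
    simp
  have hNex : ∀ i, ∃ m : ℕ, (X i : MvPolynomial (Fin n) ℂ) ^ m ∈ I :=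
    fun i => Ideal.mem_radical_iff.mp (hrad i)
  set N : ℕ := Finset.univ.sup (fun i : Fin n => (hNex i).choose) with hN
  have hXN : ∀ i, (X i : MvPolynomial (Fin n) ℂ) ^ N ∈ I := by
    intro i
    have hle : (hNex i).choose ≤ N :=
      Finset.le_sup (f := fun i : Fin n => (hNex i).choose) (Finset.mem_univ i)
    have : (X i : MvPolynomial (Fin n) ℂ) ^ N
        = X i ^ (hNex i).choose * X i ^ (N - (hNex i).choose) := by
      rw [← pow_add]; congr 1; omega
    rw [this]
    exact Ideal.mul_mem_right _ _ (hNex i).choose_spec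
  set M : ℕ := n * (N - 1) + 1 with hM
  set FD : ℕ :=
    Module.finrank ℂ (Module.Dual ℂ (homogeneousSubmodule (Fin n) ℂ M)) with hFD
  rw [← Set.not_infinite]
  intro hinf
  obtain ⟨t, hts, htfin, htcard⟩ := hinf.exists_subset_ncard_eq (FD + 1)
  set m : ℕ := FD + 1 with hm
  have htc : htfin.toFinset.card = m := by
    rw [← Set.ncard_eq_toFinset_card t htfin]; exact htcard
  have : Fintype.card (↥htfin.toFinset) = m := by rw [Fintype.card_coe]; exact htc
  set e := Fintype.equivFinOfCardEq this with he
  set xx : Fin m → Projectivization ℂ (Fin n → ℂ) := fun j => (e.symm j : _) with hxx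
  have hxinj : Function.Injective xx := by
    intro a b hab
    exact e.symm.injective (Subtype.ext hab)
  have hxmem : ∀ j, xx j ∈ {x : Projectivization ℂ (Fin n → ℂ) | ∀ p ∈ T, eval x.rep p = 0} := by
    intro j
    apply hts
    have := (e.symm j).2
    rwa [Set.Finite.mem_toFinset] at this
  set w : Fin m → (Fin n → ℂ) := fun j => (xx j).rep with hwdef
  have hw0 : ∀ j, w j ≠ 0 := fun j => Projectivization.rep_nonzero (xx j)
  have hwT : ∀ j, ∀ p ∈ T, eval (w j) p = 0 := fun j => hxmem j
  have hnonprop : ∀ i j : Fin m, i ≠ j → ∀ c : ℂ, w i ≠ c • w j := by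
    intro i j hij c hc
    have hc0 : c ≠ 0 := by
      intro h; subst h; rw [zero_smul] at hc; exact hw0 i hc
    apply hij
    apply hxinj
    have : Projectivization.mk ℂ (w i) (hw0 i) = Projectivization.mk ℂ (w j) (hw0 j) :=
      (Projectivization.mk_eq_mk_iff' ℂ _ _ (hw0 i) (hw0 j)).mpr ⟨c, hc.symm⟩
    exact (Projectivization.mk_rep (xx i)).symm.trans
      (this.trans (Projectivization.mk_rep (xx j)))
  -- separating linear forms
  have hQex : ∀ j i : Fin m, ∃ q : MvPolynomial (Fin n) ℂ, q.IsHomogeneous 1 ∧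
      (i ≠ j → eval (w i) q = 0) ∧ (i ≠ j → eval (w j) q ≠ 0) := by
    intro j i
    by_cases hij : i = j
    · exact ⟨0, isHomogeneous_zero _ _ _, fun h => absurd hij h, fun h => absurd hij h⟩
    · obtain ⟨q, hq1, hq2, hq3⟩ := sep_linear (hw0 i)
        (fun c => hnonprop j i (Ne.symm hij) c)
      exact ⟨q, hq1, fun _ => hq2, fun _ => hq3⟩
  choose Q hQ1 hQ2 hQ3 using hQex
  have hkex : ∀ j : Fin m, ∃ k : Fin n, w j k ≠ 0 := by
    intro j
    by_contra h; push_neg at h; exact hw0 j (funext h)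
  choose k hk using hkex
  -- separating polynomials of degree M + (m-1)
  set f : Fin m → MvPolynomial (Fin n) ℂ :=
    fun j => (∏ i ∈ Finset.univ.erase j, Q j i) * X (k j) ^ M with hf
  have hfhom : ∀ j, (f j).IsHomogeneous (M + (m - 1)) := by
    intro j
    have h1 : (∏ i ∈ Finset.univ.erase j, Q j i).IsHomogeneous (m - 1) := by
      have := IsHomogeneous.prod (Finset.univ.erase j) (Q j) (fun _ => 1)
        (fun i _ => hQ1 j i)
      rwa [Finset.sum_const, smul_eq_mul, mul_one,
        Finset.card_erase_of_mem (Finset.mem_univ j), Finset.card_univ,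
        Fintype.card_fin] at this
    have h2 := isHomogeneous_X_pow (R := ℂ) (k j) M
    have := h1.mul h2
    rwa [add_comm] at this
  have hfeval0 : ∀ i j : Fin m, i ≠ j → eval (w i) (f j) = 0 := by
    intro i j hij
    rw [hf]
    simp only [map_mul]
    rw [map_prod]
    rw [Finset.prod_eq_zero (Finset.mem_erase.mpr ⟨hij, Finset.mem_univ i⟩) (hQ2 j i hij)]
    rw [zero_mul]
  have hfevaln : ∀ j : Fin m, eval (w j) (f j) ≠ 0 := by
    intro j
    rw [hf]
    simp only [map_mul, map_prod, map_pow, eval_X]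
    apply mul_ne_zero
    · rw [Finset.prod_ne_zero_iff]
      intro i hi
      exact hQ3 j i (Finset.mem_erase.mp hi).1
    · exact pow_ne_zero _ (hk j)
  -- descent
  have hdesc : ∀ j : Fin m, ∃ h : MvPolynomial (Fin n) ℂ, h.IsHomogeneous M ∧
      f j - L ^ (m - 1) * h ∈ Ideal.span T := by
    intro j
    exact descent hT hL hXN (m - 1) (f j) (hfhom j)
  choose hh hh1 hh2 using hdesc
  -- the functionals
  set τ : Fin m → Module.Dual ℂ (homogeneousSubmodule (Fin n) ℂ M) :=
    fun j => (eval (w j) L) ^ (m - 1) •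
      ((evalLin (w j)).comp (Submodule.subtype _)) with hτ
  have hkill : ∀ j, ∀ p ∈ Ideal.span T, eval (w j) p = 0 := by
    intro j p hp
    have hle : Ideal.span T ≤ RingHom.ker (eval (w j)) := by
      rw [Ideal.span_le]
      intro q hq
      rw [SetLike.mem_coe, RingHom.mem_ker]
      exact hwT j q hq
    exact RingHom.mem_ker.mp (hle hp)
  have hτf : ∀ i j : Fin m, τ i ⟨hh j, hh1 j⟩ = eval (w i) (f j) := by
    intro i j
    rw [hτ]
    simp only [LinearMap.smul_apply, LinearMap.comp_apply, Submodule.subtype_apply,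
      evalLin_apply, smul_eq_mul]
    have : eval (w i) (f j) = eval (w i) (L ^ (m - 1) * hh j)
        + eval (w i) (f j - L ^ (m - 1) * hh j) := by
      rw [← map_add]; congr 1; ring
    rw [this, hkill i _ (hh2 j), add_zero, map_mul, map_pow]
  have hind : LinearIndependent ℂ τ := by
    rw [Fintype.linearIndependent_iff]
    intro g hg j0
    have := congrArg (fun (ψ : Module.Dual ℂ (homogeneousSubmodule (Fin n) ℂ M)) =>
      ψ ⟨hh j0, hh1 j0⟩) hg
    simp only [LinearMap.zero_apply] at this
    rw [LinearMap.sum_apply] at this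
    simp only [LinearMap.smul_apply, smul_eq_mul] at this
    have hsum : ∑ j, g j * (τ j ⟨hh j0, hh1 j0⟩) = 0 := this
    rw [Finset.sum_eq_single j0] at hsum
    · rw [hτf j0 j0] at hsum
      exact (mul_eq_zero.mp hsum).resolve_right (hfevaln j0)
    · intro b _ hb
      rw [hτf b j0, hfeval0 b j0 hb, mul_zero]
    · intro hj0; exact absurd (Finset.mem_univ j0) hj0
  have hcard := hind.fintype_card_le_finrank
  rw [Fintype.card_fin] at hcard
  omega

end

noncomputable section

variable {n : ℕ}

lemma eval_rep_eq_zero_of_eval_eq_zero {p : MvPolynomial (Fin n) ℂ} {e : ℕ}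
    (hp : p.IsHomogeneous e) {v : Fin n → ℂ} (hv : v ≠ 0) (h : eval v p = 0) :
    eval (Projectivization.mk ℂ v hv).rep p = 0 := by
  obtain ⟨a, ha⟩ := Projectivization.exists_smul_eq_mk_rep ℂ v hv
  rw [← ha, Units.smul_def, eval_smul_of_isHomogeneous hp, h, mul_zero]

lemma eval_eq_zero_of_eval_rep_eq_zero {p : MvPolynomial (Fin n) ℂ} {e : ℕ}
    (hp : p.IsHomogeneous e) {v : Fin n → ℂ} (hv : v ≠ 0)
    (h : eval (Projectivization.mk ℂ v hv).rep p = 0) : eval v p = 0 := by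
  obtain ⟨a, ha⟩ := Projectivization.exists_smul_eq_mk_rep ℂ v hv
  rw [← ha, Units.smul_def, eval_smul_of_isHomogeneous hp] at h
  rcases mul_eq_zero.mp h with h' | h'
  · exact absurd h' (pow_ne_zero _ (Units.ne_zero a))
  · exact h'

end

noncomputable section

lemma induction_cut (r D : ℕ) (V : Submodule ℂ (MvPolynomial (Fin (r+1)) ℂ))
    (hVhom : V ≤ homogeneousSubmodule (Fin (r+1)) ℂ D) :
    ∀ (k : ℕ) (U : Submodule ℂ (Fin (r+1) → ℂ)), Module.finrank ℂ U ≤ k →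
    (∀ v ∈ U, (∀ f ∈ V, eval v f = 0) → v = 0) →
    ∃ g : Fin k → MvPolynomial (Fin (r+1)) ℂ, (∀ i, g i ∈ V) ∧
      ∀ v ∈ U, (∀ i, eval v (g i) = 0) → v = 0 := by
  intro k
  induction k with
  | zero =>
    intro U hU _
    have hUbot : U = ⊥ := Submodule.finrank_eq_zero.mp (Nat.le_zero.mp hU)
    exact ⟨fun i => i.elim0, fun i => i.elim0,
      fun v hv _ => by rwa [hUbot, Submodule.mem_bot] at hv⟩
  | succ k ih =>
    intro U hU hbase
    by_cases hk : Module.finrank ℂ U ≤ k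
    · obtain ⟨g, hg, hcut⟩ := ih U hk hbase
      refine ⟨Fin.snoc g 0, ?_, ?_⟩
      · intro i
        refine Fin.lastCases ?_ ?_ i
        · rw [Fin.snoc_last]; exact V.zero_mem
        · intro j; rw [Fin.snoc_castSucc]; exact hg j
      · intro v hv hev
        apply hcut v hv
        intro i
        have := hev (Fin.castSucc i)
        rwa [Fin.snoc_castSucc] at this
    · -- U has dimension exactly k+1 ≥ 1
      have hUne : U ≠ ⊥ := by
        intro h
        rw [h, finrank_bot] at hk
        omega
      obtain ⟨u, huU, hu0⟩ := Submodule.exists_mem_ne_zero_of_ne_bot hUne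
      obtain ⟨i0, hi0⟩ : ∃ i, u i ≠ 0 := by
        by_contra h; push_neg at h; exact hu0 (funext h)
      set U' : Submodule ℂ (Fin (r+1) → ℂ) :=
        U ⊓ LinearMap.ker (LinearMap.proj i0 : (Fin (r+1) → ℂ) →ₗ[ℂ] ℂ) with hU'
      have hU'lt : U' < U := by
        rw [lt_iff_le_and_ne]
        refine ⟨inf_le_left, ?_⟩
        intro h
        have : u ∈ U' := h ▸ huU
        exact hi0 (this.2)
      have hU'k : Module.finrank ℂ U' ≤ k := by
        have h1 := Submodule.finrank_lt_finrank_of_lt hU'lt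
        omega
      obtain ⟨g, hg, hcut⟩ := ih U' hU'k (fun v hv h => hbase v hv.1 h)
      -- functionals cutting out U
      set Qt := (Fin (r+1) → ℂ) ⧸ U with hQt
      set b := Module.finBasis ℂ Qt with hb
      set φ : Fin (Module.finrank ℂ Qt) → ((Fin (r+1) → ℂ) →ₗ[ℂ] ℂ) :=
        fun s => (b.coord s).comp U.mkQ with hφ
      have hmk : ∀ (v : Fin (r+1) → ℂ) s, φ s v = b.repr (U.mkQ v) s := by
        intro v s
        rw [hφ]
        simp only [LinearMap.comp_apply, Module.Basis.coord_apply]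
      have hUiff : ∀ v : Fin (r+1) → ℂ, (∀ s, φ s v = 0) ↔ v ∈ U := by
        intro v
        constructor
        · intro h
          have h0 : U.mkQ v = 0 := by
            apply b.repr.injective
            ext s
            rw [map_zero, Finsupp.zero_apply, ← hmk v s]
            exact h s
          rwa [Submodule.mkQ_apply, Submodule.Quotient.mk_eq_zero] at h0
        · intro h s
          have h0 : U.mkQ v = 0 := by
            rw [Submodule.mkQ_apply, Submodule.Quotient.mk_eq_zero]; exact h
          rw [hmk v s, h0, map_zero, Finsupp.zero_apply]
      set T : Set (MvPolynomial (Fin (r+1)) ℂ) :=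
        Set.range g ∪ Set.range (fun s => phiPoly (φ s)) with hT
      have hThom : ∀ p ∈ T, ∃ e, p.IsHomogeneous e := by
        intro p hp
        rcases hp with ⟨i, rfl⟩ | ⟨s, rfl⟩
        · exact ⟨D, hVhom (hg i)⟩
        · exact ⟨1, phiPoly_isHomogeneous _⟩
      have hfin := finiteCut T hThom (isHomogeneous_X ℂ i0)
        (by
          intro v hvT hvL
          apply hcut v
          · rw [hU', Submodule.mem_inf]
            constructor
            · rw [← hUiff v]
              intro s
              rw [← eval_phiPoly (φ s) v]
              exact hvT _ (Set.mem_union_right _ ⟨s, rfl⟩)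
            · rw [LinearMap.mem_ker, LinearMap.proj_apply]
              rw [eval_X] at hvL
              exact hvL
          · intro i
            exact hvT (g i) (Set.mem_union_left _ ⟨i, rfl⟩))
      -- choose the last polynomial avoiding all the finitely many lines
      set SF := hfin.toFinset with hSF
      have hFex : ∀ x ∈ SF, ∃ fx, fx ∈ V ∧ eval (Projectivization.rep x) fx ≠ 0 := by
        intro x hx
        rw [Set.Finite.mem_toFinset] at hx
        by_contra h
        push_neg at h
        have hrep0 : Projectivization.rep x = 0 := by
          apply hbase
          · rw [← hUiff]
            intro s
            rw [← eval_phiPoly (φ s)]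
            exact hx _ (Set.mem_union_right _ ⟨s, rfl⟩)
          · exact h
        exact Projectivization.rep_nonzero x hrep0
      choose! F hF1 hF2 using hFex
      set m' := SF.card with hm'
      set ee : ↥SF ≃ Fin m' := SF.equivFin with hee
      set pc : ↥SF → Polynomial ℂ := fun x =>
        ∑ i : Fin m', Polynomial.C (eval (Projectivization.rep x.1) (F (ee.symm i).1))
          * Polynomial.X ^ (i : ℕ) with hpc
      have hpc0 : ∀ x : ↥SF, pc x ≠ 0 := by
        intro x hx
        have h1 : (pc x).coeff ((ee x : Fin m') : ℕ) =
            eval (Projectivization.rep x.1) (F (ee.symm (ee x)).1) :=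
          coeff_sum_CXpow (fun i => eval (Projectivization.rep x.1) (F (ee.symm i).1)) (ee x)
        rw [hx, Polynomial.coeff_zero, Equiv.symm_apply_apply] at h1
        exact hF2 x.1 x.2 h1.symm
      obtain ⟨c, hc⟩ := exists_avoid Finset.univ pc (fun x _ => hpc0 x)
      set glast : MvPolynomial (Fin (r+1)) ℂ :=
        ∑ i : Fin m', c ^ (i : ℕ) • F (ee.symm i).1 with hglast
      have hglastV : glast ∈ V :=
        Submodule.sum_mem V (fun i _ => Submodule.smul_mem V _ (hF1 _ (ee.symm i).2))
      have hglasteval : ∀ x : ↥SF, eval (Projectivization.rep x.1) glast ≠ 0 := by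
        intro x
        have hpcx : pc x = ∑ i : Fin m',
            Polynomial.C (eval (Projectivization.rep x.1) (F (ee.symm i).1))
              * Polynomial.X ^ (i : ℕ) := rfl
        have heq : eval (Projectivization.rep x.1) glast = (pc x).eval c := by
          rw [hglast, map_sum, hpcx, Polynomial.eval_finset_sum]
          apply Finset.sum_congr rfl
          intro i _
          rw [smul_eq_C_mul, map_mul, eval_C, Polynomial.eval_mul, Polynomial.eval_C,
            Polynomial.eval_pow, Polynomial.eval_X, mul_comm]
        rw [heq]
        exact hc x (Finset.mem_univ x)
      refine ⟨Fin.snoc g glast, ?_, ?_⟩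
      · intro i
        refine Fin.lastCases ?_ ?_ i
        · rw [Fin.snoc_last]; exact hglastV
        · intro j; rw [Fin.snoc_castSucc]; exact hg j
      · intro v hvU hev
        by_contra hv0
        -- the projective point of v lies in SF
        have hvT : ∀ p ∈ T, eval v p = 0 := by
          intro p hp
          rcases hp with ⟨i, rfl⟩ | ⟨s, rfl⟩
          · have := hev (Fin.castSucc i)
            rwa [Fin.snoc_castSucc] at this
          · rw [eval_phiPoly]
            exact (hUiff v).mpr hvU s
        have hxmem : Projectivization.mk ℂ v hv0 ∈ {x : Projectivization ℂ (Fin (r+1) → ℂ) |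
            ∀ p ∈ T, eval x.rep p = 0} := by
          intro p hp
          obtain ⟨e, he⟩ := hThom p hp
          exact eval_rep_eq_zero_of_eval_eq_zero he hv0 (hvT p hp)
        have hxSF : Projectivization.mk ℂ v hv0 ∈ SF := (Set.Finite.mem_toFinset hfin).mpr hxmem
        have hlast := hev (Fin.last k)
        rw [Fin.snoc_last] at hlast
        have : eval (Projectivization.rep (Projectivization.mk ℂ v hv0)) glast = 0 :=
          eval_rep_eq_zero_of_eval_eq_zero (hVhom hglastV) hv0 hlast
        exact hglasteval ⟨_, hxSF⟩ this

end

end Aux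

noncomputable section

lemma mem_projZeroLocus_iff {r : ℕ} {f : MvPolynomial (Fin (r+1)) ℂ} {e : ℕ}
    (hf : f.IsHomogeneous e) (x : Projectivization ℂ (Fin (r+1) → ℂ)) :
    x ∈ projZeroLocus r f ↔ eval x.rep f = 0 := by
  constructor
  · intro h
    exact h x.rep x.rep_nonzero x.mk_rep
  · intro h v hv hmk
    apply eval_eq_zero_of_eval_rep_eq_zero hf hv
    rw [hmk]
    exact h


/-- If `V` is a ℂ-linear space of homogeneous polynomials of degree `D ≥ 1` in `r+1`
variables containing a nonzero element and the common projective zero locus `Z` of `V`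
in `ℙ^r(ℂ)` is finite, then there are `f_1, …, f_r ∈ V` whose common projective zero
locus is finite and contains `Z`. -/
theorem exists_r_sections_cutting_out (r D : ℕ) (hr : 1 ≤ r) (hD : 1 ≤ D)
    (V : Submodule ℂ (MvPolynomial (Fin (r+1)) ℂ))
    (hVhom : V ≤ homogeneousSubmodule (Fin (r+1)) ℂ D)
    (hVne : ∃ f ∈ V, f ≠ 0)
    (hfin : (⋂ f ∈ (V : Set (MvPolynomial (Fin (r+1)) ℂ)), projZeroLocus r f).Finite) :
    ∃ g : Fin r → MvPolynomial (Fin (r+1)) ℂ,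
      (∀ i, g i ∈ V) ∧
      (⋂ i, projZeroLocus r (g i)).Finite ∧
      (⋂ f ∈ (V : Set (MvPolynomial (Fin (r+1)) ℂ)), projZeroLocus r f)
        ⊆ ⋂ i, projZeroLocus r (g i) := by
  classical
  set SZ := hfin.toFinset with hSZ
  set px : ↥SZ → Polynomial ℂ := fun x =>
    ∑ i : Fin (r+1), Polynomial.C ((x : Projectivization ℂ (Fin (r+1) → ℂ)).rep i)
      * Polynomial.X ^ (i : ℕ) with hpx
  have hpx0 : ∀ x : ↥SZ, px x ≠ 0 := by
    intro x hx
    obtain ⟨i, hi⟩ : ∃ i, (x : Projectivization ℂ (Fin (r+1) → ℂ)).rep i ≠ 0 := by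
      by_contra h; push_neg at h
      exact Projectivization.rep_nonzero _ (funext h)
    have h1 : (px x).coeff ((i : Fin (r+1)) : ℕ) =
        (x : Projectivization ℂ (Fin (r+1) → ℂ)).rep i :=
      coeff_sum_CXpow (fun i => (x : Projectivization ℂ (Fin (r+1) → ℂ)).rep i) i
    rw [hx, Polynomial.coeff_zero] at h1
    exact hi h1.symm
  obtain ⟨c, hc⟩ := exists_avoid Finset.univ px (fun x _ => hpx0 x)
  set Lc : MvPolynomial (Fin (r+1)) ℂ := ∑ i : Fin (r+1), C (c ^ (i : ℕ)) * X i with hLc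
  have hLchom : Lc.IsHomogeneous 1 :=
    IsHomogeneous.sum _ _ _ fun i _ => (isHomogeneous_X ℂ i).C_mul _
  have hevalLc : ∀ v : Fin (r+1) → ℂ, eval v Lc = ∑ i : Fin (r+1), c ^ (i : ℕ) * v i := by
    intro v
    rw [hLc, map_sum]
    apply Finset.sum_congr rfl
    intro i _
    rw [map_mul, eval_C, eval_X]
  have hLcrep : ∀ x : ↥SZ,
      eval ((x : Projectivization ℂ (Fin (r+1) → ℂ)).rep) Lc ≠ 0 := by
    intro x
    have h1 : eval ((x : Projectivization ℂ (Fin (r+1) → ℂ)).rep) Lc = (px x).eval c := by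
      rw [hevalLc]
      have : px x = ∑ i : Fin (r+1),
          Polynomial.C ((x : Projectivization ℂ (Fin (r+1) → ℂ)).rep i)
            * Polynomial.X ^ (i : ℕ) := rfl
      rw [this, Polynomial.eval_finset_sum]
      apply Finset.sum_congr rfl
      intro i _
      rw [Polynomial.eval_mul, Polynomial.eval_C, Polynomial.eval_pow, Polynomial.eval_X,
        mul_comm]
    rw [h1]
    exact hc x (Finset.mem_univ x)
  set ℓc : (Fin (r+1) → ℂ) →ₗ[ℂ] ℂ :=
    ∑ i : Fin (r+1), (c ^ (i : ℕ)) • (LinearMap.proj i) with hℓc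
  have hℓeval : ∀ v, ℓc v = eval v Lc := by
    intro v
    rw [hevalLc, hℓc]
    rw [LinearMap.sum_apply]
    apply Finset.sum_congr rfl
    intro i _
    rw [LinearMap.smul_apply, LinearMap.proj_apply, smul_eq_mul]
  set U₀ := LinearMap.ker ℓc with hU₀
  have hU₀rank : Module.finrank ℂ U₀ ≤ r := by
    have hrn := LinearMap.finrank_range_add_finrank_ker ℓc
    rw [Module.finrank_pi, Fintype.card_fin] at hrn
    have hne : LinearMap.range ℓc ≠ ⊥ := by
      intro h
      have h1 : ℓc (Pi.single 0 1) = 1 := by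
        rw [hℓeval, hevalLc]
        rw [Finset.sum_eq_single (0 : Fin (r+1))]
        · simp
        · intro b _ hb; simp [Pi.single_apply, hb]
        · intro h; exact absurd (Finset.mem_univ _) h
      have : ℓc (Pi.single 0 1) = 0 := by
        have := LinearMap.mem_range_self ℓc (Pi.single 0 1)
        rw [h, Submodule.mem_bot] at this
        exact this
      rw [h1] at this
      exact one_ne_zero this
    have : Module.finrank ℂ (LinearMap.range ℓc) ≠ 0 := by
      intro h
      exact hne (Submodule.finrank_eq_zero.mp h)
    rw [hU₀]
    omega
  have hbase₀ : ∀ v ∈ U₀, (∀ f ∈ V, eval v f = 0) → v = 0 := by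
    intro v hvU hvV
    by_contra hv0
    have hxZ : Projectivization.mk ℂ v hv0 ∈
        ⋂ f ∈ (V : Set (MvPolynomial (Fin (r+1)) ℂ)), projZeroLocus r f := by
      rw [Set.mem_iInter₂]
      intro f hf
      rw [mem_projZeroLocus_iff (hVhom hf)]
      exact eval_rep_eq_zero_of_eval_eq_zero (hVhom hf) hv0 (hvV f hf)
    have hxSZ : Projectivization.mk ℂ v hv0 ∈ SZ := (Set.Finite.mem_toFinset hfin).mpr hxZ
    apply hLcrep ⟨_, hxSZ⟩
    apply eval_rep_eq_zero_of_eval_eq_zero hLchom hv0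
    rw [← hℓeval]
    exact hvU
  obtain ⟨g, hgV, hcut⟩ := induction_cut r D V hVhom r U₀ hU₀rank hbase₀
  have hghom : ∀ i, (g i).IsHomogeneous D := fun i => hVhom (hgV i)
  have hfin2 := finiteCut (Set.range g) (fun p hp => by
      obtain ⟨i, rfl⟩ := hp; exact ⟨D, hghom i⟩) hLchom
    (by
      intro v hvT hvL
      apply hcut v
      · rw [hU₀, LinearMap.mem_ker, hℓeval]
        exact hvL
      · intro i
        exact hvT (g i) ⟨i, rfl⟩)
  refine ⟨g, hgV, ?_, ?_⟩
  · apply hfin2.subset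
    intro x hx
    rw [Set.mem_iInter] at hx
    intro p hp
    obtain ⟨i, rfl⟩ := hp
    exact (mem_projZeroLocus_iff (hghom i) x).mp (hx i)
  · intro x hxZ
    rw [Set.mem_iInter]
    intro i
    exact (Set.mem_iInter₂.mp hxZ) (g i) (hgV i)

end
end

section
/- Let ι be a nonempty finite type, let e be a natural number, and let A, B : ι → MvPolynomial σ ℂ (σ a finite type of variables) be families of polynomials such that every A_i and every B_i is homogeneous of degree e, the family A is not identically zero, and the polynomials A_i have no common nonconstant factor. If A_i · B_j = A_j · B_i for all i, j ∈ ι, then there exists a constant λ ∈ ℂ such that B_i = λ • A_i for every i ∈ ι. -/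
open MvPolynomial

lemma homogeneousComponent_of_isHomogeneous {σ R : Type*} [CommSemiring R]
    {φ : MvPolynomial σ R} {k : ℕ} (hφ : φ.IsHomogeneous k) :
    homogeneousComponent k φ = φ := by
  ext d
  rw [coeff_homogeneousComponent]
  split_ifs with hd
  · rfl
  · exact (hφ.coeff_eq_zero hd).symm

lemma homogeneousComponent_eq_zero_of_isHomogeneous {σ R : Type*} [CommSemiring R]
    {φ : MvPolynomial σ R} {k m : ℕ} (hφ : φ.IsHomogeneous k) (hm : m ≠ k) :
    homogeneousComponent m φ = 0 := by
  ext d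
  rw [coeff_homogeneousComponent]
  split_ifs with hd
  · simpa using hφ.coeff_eq_zero (by rw [hd]; exact hm)
  · simp

/-- If `p` is nonzero homogeneous of degree `e` and `p * c` is homogeneous of degree `e`,
then `c` is a constant. -/
lemma eq_C_of_mul_homogeneous {σ : Type*} {p c : MvPolynomial σ ℂ} {e : ℕ}
    (hp : p.IsHomogeneous e) (hp0 : p ≠ 0) (hpc : (p * c).IsHomogeneous e) :
    ∃ lam : ℂ, c = C lam := by
  rcases eq_or_ne c 0 with rfl | hc0
  · exact ⟨0, by simp⟩
  -- show the total degree of `c` is zero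
  have hN : c.totalDegree = 0 := by
    by_contra hN
    set N := c.totalDegree with hNdef
    have hcN : homogeneousComponent N c ≠ 0 := by
      obtain ⟨d, hd, hdeq⟩ := Finset.exists_mem_eq_sup c.support
        (support_nonempty.mpr hc0) (fun m => m.sum fun _ e => e)
      intro hzero
      have : coeff d (homogeneousComponent N c) = coeff d c := by
        rw [coeff_homogeneousComponent, if_pos]
        exact hdeq.symm
      rw [hzero] at this
      exact (mem_support_iff.mp hd) (by simpa using this.symm)
    -- compute the homogeneous component of `p * c` in degree `e + N`
    have hsum : p * c =
        ∑ i ∈ Finset.range (N + 1), p * homogeneousComponent i c := by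
      rw [← Finset.mul_sum, sum_homogeneousComponent]
    have hcomp : homogeneousComponent (e + N) (p * c) = p * homogeneousComponent N c := by
      rw [hsum, map_sum]
      rw [Finset.sum_eq_single N]
      · exact homogeneousComponent_of_isHomogeneous
          (hp.mul (homogeneousComponent_isHomogeneous N c))
      · intro i hi hiN
        exact homogeneousComponent_eq_zero_of_isHomogeneous
          (hp.mul (homogeneousComponent_isHomogeneous i c)) (by omega)
      · intro hNmem
        exact absurd (Finset.self_mem_range_succ N) hNmem
    have hzero : homogeneousComponent (e + N) (p * c) = 0 :=
      homogeneousComponent_eq_zero_of_isHomogeneous hpc (by omega)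
    rw [hzero] at hcomp
    exact (mul_ne_zero hp0 hcN) hcomp.symm
  -- conclude `c` is constant
  have hhom : c.IsHomogeneous 0 := (totalDegree_zero_iff_isHomogeneous σ).mp hN
  refine ⟨coeff 0 c, ?_⟩
  have h0 := homogeneousComponent_of_isHomogeneous hhom
  rw [homogeneousComponent_zero] at h0
  exact h0.symm

/-- If `(A_i)` and `(B_i)` are families of homogeneous polynomials of the same degree `e`
over ℂ (indexed by a nonempty finite type, in finitely many variables), the `A_i` are not
all zero and have no common nonconstant factor, and `A_i · B_j = A_j · B_i` for all `i, j`,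
then there is a constant `λ ∈ ℂ` with `B_i = λ • A_i` for all `i`. -/
theorem proportional_of_cross_products_eq
    {ι σ : Type*} [Fintype ι] [Nonempty ι] [Fintype σ] (e : ℕ)
    (A B : ι → MvPolynomial σ ℂ)
    (hA : ∀ i, (A i).IsHomogeneous e)
    (hB : ∀ i, (B i).IsHomogeneous e)
    (hne : ∃ i, A i ≠ 0)
    (hgcd : ∀ q : MvPolynomial σ ℂ, (∀ i, q ∣ A i) → IsUnit q)
    (h : ∀ i j, A i * B j = A j * B i) :
    ∃ lam : ℂ, ∀ i, B i = lam • A i := by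
  classical
  letI : NormalizationMonoid (MvPolynomial σ ℂ) :=
    (UniqueFactorizationMonoid.normalizationMonoid).toNormalizationMonoid
  letI : GCDMonoid (MvPolynomial σ ℂ) :=
    UniqueFactorizationMonoid.toGCDMonoid (MvPolynomial σ ℂ)
  obtain ⟨i0, hi0⟩ := hne
  obtain ⟨a, b, hA0, hB0, hab⟩ := extract_gcd (A i0) (B i0)
  set d := gcd (A i0) (B i0) with hd
  have hd0 : d ≠ 0 := by
    intro hdz
    apply hi0
    rw [hA0, hdz, zero_mul]
  -- cancel `d` in the cross-product relation
  have key : ∀ j, a * B j = A j * b := by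
    intro j
    have := h i0 j
    rw [hA0, hB0] at this
    apply mul_left_cancel₀ hd0
    ring_nf
    ring_nf at this
    linear_combination this
  -- `a` divides every `A j`
  have hrel : IsRelPrime a b := gcd_isUnit_iff_isRelPrime.mp hab
  have hadvd : ∀ j, a ∣ A j := fun j =>
    hrel.dvd_of_dvd_mul_right ⟨B j, by rw [← key j, mul_comm]⟩
  have ha : IsUnit a := hgcd a hadvd
  -- hence `A i0` divides `B i0`
  have hdvd : A i0 ∣ B i0 := by
    refine ⟨(↑ha.unit⁻¹ : MvPolynomial σ ℂ) * b, ?_⟩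
    rw [hA0, hB0]
    have : a * (↑ha.unit⁻¹ : MvPolynomial σ ℂ) = 1 := ha.mul_val_inv
    calc d * b = d * 1 * b := by ring
      _ = d * (a * ↑ha.unit⁻¹) * b := by rw [this]
      _ = d * a * (↑ha.unit⁻¹ * b) := by ring
  obtain ⟨c, hc⟩ := hdvd
  -- `c` is a constant
  obtain ⟨lam, rfl⟩ : ∃ lam : ℂ, c = C lam := by
    apply eq_C_of_mul_homogeneous (hA i0) hi0
    rw [← hc]; exact hB i0
  refine ⟨lam, fun j => ?_⟩
  have := h i0 j
  rw [hc] at this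
  have h2 : A i0 * B j = A i0 * (C lam * A j) := by linear_combination this
  have := mul_left_cancel₀ hi0 h2
  rw [this, smul_eq_C_mul]
end

section
/- Let N ≥ 2, k ≥ 1, d ≥ 0, and let P ∈ MvPolynomial (Fin (N+1) ⊕ Fin (N+1)) ℂ be a nonzero bihomogeneous polynomial of degree d+k in the x-variables and degree k in the dx-variables whose coefficients A_I have no common nonconstant factor. Then for every invertible matrix M ∈ GL (Fin (N+1)) ℂ the following are equivalent: (i) there exists λ ∈ ℂˣ with M•P = λ • P; (ii) A_I · B_J = A_J · B_I for all exponent vectors I, J of total degree k, where B_I denotes the coefficient of (dx)^I in M•P. -/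
open MvPolynomial

/-- Pullback of a `k`-symmetric form in homogeneous coordinates on `ℙ^N` by a matrix `M`:
the algebra substitution `x_i ↦ ∑ j, M i j • x_j`, `dx_i ↦ ∑ j, M i j • dx_j`,
where the variables `Sum.inl i` are the coordinates `x_i` and `Sum.inr i` the differentials. -/
noncomputable def webPullback (N : ℕ) (M : Matrix (Fin (N+1)) (Fin (N+1)) ℂ)
    (P : MvPolynomial (Fin (N+1) ⊕ Fin (N+1)) ℂ) : MvPolynomial (Fin (N+1) ⊕ Fin (N+1)) ℂ :=
  aeval (Sum.elim
    (fun i => ∑ j, M i j • (X (Sum.inl j) : MvPolynomial (Fin (N+1) ⊕ Fin (N+1)) ℂ))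
    (fun i => ∑ j, M i j • (X (Sum.inr j) : MvPolynomial (Fin (N+1) ⊕ Fin (N+1)) ℂ))) P

/-- The coefficient polynomial `A_I ∈ ℂ[x_0,…,x_N]` of `(dx)^I` in `P`. -/
noncomputable def webCoeff (N : ℕ) (P : MvPolynomial (Fin (N+1) ⊕ Fin (N+1)) ℂ)
    (I : Fin (N+1) → ℕ) : MvPolynomial (Fin (N+1)) ℂ :=
  MvPolynomial.coeff (Finsupp.equivFunOnFinite.symm I)
    ((MvPolynomial.sumAlgEquiv ℂ (Fin (N+1)) (Fin (N+1)))
      ((MvPolynomial.renameEquiv ℂ (Equiv.sumComm (Fin (N+1)) (Fin (N+1)))) P))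

/-! ### auxiliary lemmas -/

lemma aux_monomial_eq_prod {σ R : Type*} [CommSemiring R] [Fintype σ] (m : σ →₀ ℕ) (a : R) :
    monomial m a = C a * ∏ i, X i ^ m i := by
  rw [monomial_eq]
  congr 1
  rw [Finsupp.prod_fintype]
  intro i; exact pow_zero _

lemma aux_coeff_coeff_phi (N : ℕ) (P : MvPolynomial (Fin (N+1) ⊕ Fin (N+1)) ℂ)
    (n I : Fin (N+1) →₀ ℕ) :
    MvPolynomial.coeff n (MvPolynomial.coeff I
      ((MvPolynomial.sumAlgEquiv ℂ (Fin (N+1)) (Fin (N+1)))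
        ((MvPolynomial.renameEquiv ℂ (Equiv.sumComm (Fin (N+1)) (Fin (N+1)))) P)))
      = MvPolynomial.coeff (Finsupp.sumElim n I) P := by
  induction P using MvPolynomial.induction_on' with
  | add p q hp hq => simp only [map_add, coeff_add, hp, hq]
  | monomial u a =>
    have key : (MvPolynomial.sumAlgEquiv ℂ (Fin (N+1)) (Fin (N+1)))
        ((MvPolynomial.renameEquiv ℂ (Equiv.sumComm (Fin (N+1)) (Fin (N+1)))) (monomial u a))
        = C (monomial (Finsupp.equivFunOnFinite.symm fun i => u (.inl i)) a)
          * monomial (Finsupp.equivFunOnFinite.symm fun i => u (.inr i)) 1 := by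
      rw [aux_monomial_eq_prod]
      simp only [map_mul, map_prod, map_pow, renameEquiv_apply, rename_X, rename_C,
        sumAlgEquiv_C_inl, sumAlgEquiv_X_inl, sumAlgEquiv_X_inr, sumToIter_C, Fintype.prod_sum_type, Equiv.sumComm_apply,
        Sum.swap_inl, Sum.swap_inr, sumToIter_Xl, sumToIter_Xr]
      rw [aux_monomial_eq_prod, aux_monomial_eq_prod, map_one, one_mul]
      simp only [Finsupp.coe_equivFunOnFinite_symm, map_mul, map_prod, map_pow]
      ring
    rw [key, coeff_C_mul, coeff_monomial]
    simp only [mul_ite, mul_one, mul_zero, apply_ite (MvPolynomial.coeff n), coeff_monomial,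
      coeff_zero]
    by_cases h : u = Finsupp.sumElim n I
    · subst h
      have h1 : (Finsupp.equivFunOnFinite.symm fun i => (Finsupp.sumElim n I) (Sum.inr i)) = I := by
        ext i; simp
      have h2 : (Finsupp.equivFunOnFinite.symm fun i => (Finsupp.sumElim n I) (Sum.inl i)) = n := by
        ext i; simp
      simp [h1, h2]
    · rw [if_neg h]
      split_ifs with hI hn
      · exfalso; apply h; ext s
        cases s with
        | inl i =>
          have := DFunLike.congr_fun hn i
          simpa using this
        | inr i =>
          have := DFunLike.congr_fun hI i
          simpa using this
      · rfl
      · rfl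

/-- The basic bridge: coefficients of `webCoeff` are coefficients of `P`. -/
lemma aux_coeff_webCoeff (N : ℕ) (P : MvPolynomial (Fin (N+1) ⊕ Fin (N+1)) ℂ)
    (n : Fin (N+1) →₀ ℕ) (I : Fin (N+1) → ℕ) :
    MvPolynomial.coeff n (webCoeff N P I)
      = MvPolynomial.coeff (Finsupp.sumElim n (Finsupp.equivFunOnFinite.symm I)) P :=
  aux_coeff_coeff_phi N P n _

lemma aux_sumElim_parts (N : ℕ) (m : (Fin (N+1) ⊕ Fin (N+1)) →₀ ℕ) :
    Finsupp.sumElim (Finsupp.equivFunOnFinite.symm fun i => m (Sum.inl i))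
      (Finsupp.equivFunOnFinite.symm fun i => m (Sum.inr i)) = m := by
  ext s; cases s <;> simp

lemma aux_symm_symm (N : ℕ) (m : (Fin (N+1) ⊕ Fin (N+1)) →₀ ℕ) :
    (Finsupp.equivFunOnFinite.symm fun i => m (Sum.inr i))
      = Finsupp.equivFunOnFinite.symm ((fun i => m (Sum.inr i)) : Fin (N+1) → ℕ) := rfl

lemma webPullback_one (N : ℕ) (P : MvPolynomial (Fin (N+1) ⊕ Fin (N+1)) ℂ) :
    webPullback N 1 P = P := by
  unfold webPullback
  have h : (Sum.elim
      (fun i => ∑ j, (1 : Matrix (Fin (N+1)) (Fin (N+1)) ℂ) i j • (X (Sum.inl j) : MvPolynomial (Fin (N+1) ⊕ Fin (N+1)) ℂ))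
      (fun i => ∑ j, (1 : Matrix (Fin (N+1)) (Fin (N+1)) ℂ) i j • (X (Sum.inr j) : MvPolynomial (Fin (N+1) ⊕ Fin (N+1)) ℂ)))
      = X := by
    funext s
    cases s with
    | inl i => simp [Matrix.one_apply, Finset.sum_ite_eq]
    | inr i => simp [Matrix.one_apply, Finset.sum_ite_eq]
  rw [h, aeval_X_left, AlgHom.id_apply]

lemma webPullback_comp (N : ℕ) (M M' : Matrix (Fin (N+1)) (Fin (N+1)) ℂ)
    (P : MvPolynomial (Fin (N+1) ⊕ Fin (N+1)) ℂ) :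
    webPullback N M' (webPullback N M P) = webPullback N (M * M') P := by
  unfold webPullback
  have h := congrFun (congrArg DFunLike.coe (comp_aeval
    (Sum.elim (fun i => ∑ j : Fin (N + 1), M i j • (X (Sum.inl j) : MvPolynomial (Fin (N+1) ⊕ Fin (N+1)) ℂ)) fun i =>
            ∑ j : Fin (N + 1), M i j • X (Sum.inr j))
    (aeval
        (Sum.elim (fun i => ∑ j : Fin (N + 1), M' i j • (X (Sum.inl j) : MvPolynomial (Fin (N+1) ⊕ Fin (N+1)) ℂ)) fun i =>
          ∑ j : Fin (N + 1), M' i j • X (Sum.inr j))))) P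
  simp only [AlgHom.coe_comp, Function.comp_apply] at h
  rw [h]
  have hfun : (fun i => (aeval
        (Sum.elim (fun i => ∑ j : Fin (N + 1), M' i j • (X (Sum.inl j) : MvPolynomial (Fin (N+1) ⊕ Fin (N+1)) ℂ)) fun i =>
          ∑ j : Fin (N + 1), M' i j • X (Sum.inr j)))
        (Sum.elim (fun i => ∑ j : Fin (N + 1), M i j • (X (Sum.inl j) : MvPolynomial (Fin (N+1) ⊕ Fin (N+1)) ℂ))
          (fun i => ∑ j : Fin (N + 1), M i j • X (Sum.inr j)) i))
      = (Sum.elim (fun i => ∑ j : Fin (N + 1), (M * M') i j • (X (Sum.inl j) : MvPolynomial (Fin (N+1) ⊕ Fin (N+1)) ℂ)) fun i =>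
          ∑ j : Fin (N + 1), (M * M') i j • X (Sum.inr j)) := by
    funext s
    cases s with
    | inl i =>
      simp only [Sum.elim_inl, map_sum, map_smul, aeval_X, Sum.elim_inr, Matrix.mul_apply,
        Finset.sum_smul, Finset.smul_sum, smul_smul]
      rw [Finset.sum_comm]
    | inr i =>
      simp only [Sum.elim_inl, map_sum, map_smul, aeval_X, Sum.elim_inr, Matrix.mul_apply,
        Finset.sum_smul, Finset.smul_sum, smul_smul]
      rw [Finset.sum_comm]
  rw [hfun]

lemma aux_isWH_pow {σ : Type*} (w : σ → ℕ) (φ : MvPolynomial σ ℂ) (m e : ℕ)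
    (h : IsWeightedHomogeneous w φ m) : IsWeightedHomogeneous w (φ ^ e) (e * m) := by
  induction e with
  | zero => simpa using isWeightedHomogeneous_one ℂ w
  | succ e ih =>
    rw [pow_succ, Nat.succ_mul]
    exact ih.mul h

lemma aux_isWH_aeval {σ τ : Type*} [Fintype σ]
    (w : σ → ℕ) (w' : τ → ℕ) (f : σ → MvPolynomial τ ℂ)
    (hf : ∀ s, IsWeightedHomogeneous w' (f s) (w s))
    (p : MvPolynomial σ ℂ) (n : ℕ) (hp : IsWeightedHomogeneous w p n) :
    IsWeightedHomogeneous w' (aeval f p) n := by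
  rw [aeval_def, eval₂_eq]
  rw [← mem_weightedHomogeneousSubmodule]
  apply Submodule.sum_mem
  intro m hm
  rw [mem_weightedHomogeneousSubmodule]
  have hdeg : Finsupp.weight w m = n := hp (mem_support_iff.mp hm)
  have h1 : IsWeightedHomogeneous w'
      ((algebraMap ℂ (MvPolynomial τ ℂ)) (coeff m p) * ∏ i ∈ m.support, f i ^ m i)
      (0 + ∑ i ∈ m.support, m i * w i) := by
    apply IsWeightedHomogeneous.mul
    · exact isWeightedHomogeneous_C _ _
    · exact IsWeightedHomogeneous.prod _ _ _ (fun i _ => aux_isWH_pow w' (f i) (w i) (m i) (hf i))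
  have h2 : (0 + ∑ i ∈ m.support, m i * w i) = n := by
    rw [zero_add, ← hdeg, Finsupp.weight_apply, Finsupp.sum]
    simp [smul_eq_mul]
  rwa [h2] at h1

lemma aux_weight_inl (N : ℕ) (m : (Fin (N+1) ⊕ Fin (N+1)) →₀ ℕ) :
    Finsupp.weight (Sum.elim (fun _ => 1) (fun _ => 0) : (Fin (N+1) ⊕ Fin (N+1)) → ℕ) m
      = ∑ i, m (Sum.inl i) := by
  rw [Finsupp.weight_apply, Finsupp.sum_fintype]
  · rw [Fintype.sum_sum_type]
    simp
  · intro i; simp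

lemma aux_weight_inr (N : ℕ) (m : (Fin (N+1) ⊕ Fin (N+1)) →₀ ℕ) :
    Finsupp.weight (Sum.elim (fun _ => 0) (fun _ => 1) : (Fin (N+1) ⊕ Fin (N+1)) → ℕ) m
      = ∑ i, m (Sum.inr i) := by
  rw [Finsupp.weight_apply, Finsupp.sum_fintype]
  · rw [Fintype.sum_sum_type]
    simp
  · intro i; simp

lemma aux_weight_one {σ : Type*} [Fintype σ] (n : σ →₀ ℕ) :
    Finsupp.weight (1 : σ → ℕ) n = ∑ i, n i := by
  rw [Finsupp.weight_apply, Finsupp.sum_fintype]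
  · simp
  · intro i; simp

/-- Pullback preserves bihomogeneity. -/
lemma webPullback_support (N d k : ℕ) (M : Matrix (Fin (N+1)) (Fin (N+1)) ℂ)
    (P : MvPolynomial (Fin (N+1) ⊕ Fin (N+1)) ℂ)
    (hbihom : ∀ m ∈ P.support,
      (∑ i, m (Sum.inl i)) = d + k ∧ (∑ i, m (Sum.inr i)) = k) :
    ∀ m ∈ (webPullback N M P).support,
      (∑ i, m (Sum.inl i)) = d + k ∧ (∑ i, m (Sum.inr i)) = k := by
  set w1 : (Fin (N+1) ⊕ Fin (N+1)) → ℕ := Sum.elim (fun _ => 1) (fun _ => 0) with hw1def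
  set w2 : (Fin (N+1) ⊕ Fin (N+1)) → ℕ := Sum.elim (fun _ => 0) (fun _ => 1) with hw2def
  set f : (Fin (N+1) ⊕ Fin (N+1)) → MvPolynomial (Fin (N+1) ⊕ Fin (N+1)) ℂ := Sum.elim
    (fun i => ∑ j, M i j • (X (Sum.inl j) : MvPolynomial (Fin (N+1) ⊕ Fin (N+1)) ℂ))
    (fun i => ∑ j, M i j • (X (Sum.inr j) : MvPolynomial (Fin (N+1) ⊕ Fin (N+1)) ℂ)) with hfdef
  have hP1 : IsWeightedHomogeneous w1 P (d+k) := fun m hm => by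
    rw [hw1def, aux_weight_inl]; exact (hbihom m (mem_support_iff.mpr hm)).1
  have hP2 : IsWeightedHomogeneous w2 P k := fun m hm => by
    rw [hw2def, aux_weight_inr]; exact (hbihom m (mem_support_iff.mpr hm)).2
  have hf1 : ∀ s, IsWeightedHomogeneous w1 (f s) (w1 s) := by
    intro s
    rw [← mem_weightedHomogeneousSubmodule]
    cases s with
    | inl i =>
      apply Submodule.sum_mem
      intro j _
      apply Submodule.smul_mem
      rw [mem_weightedHomogeneousSubmodule]
      simpa [hw1def] using isWeightedHomogeneous_X ℂ w1 (Sum.inl j)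
    | inr i =>
      apply Submodule.sum_mem
      intro j _
      apply Submodule.smul_mem
      rw [mem_weightedHomogeneousSubmodule]
      simpa [hw1def] using isWeightedHomogeneous_X ℂ w1 (Sum.inr j)
  have hf2 : ∀ s, IsWeightedHomogeneous w2 (f s) (w2 s) := by
    intro s
    rw [← mem_weightedHomogeneousSubmodule]
    cases s with
    | inl i =>
      apply Submodule.sum_mem
      intro j _
      apply Submodule.smul_mem
      rw [mem_weightedHomogeneousSubmodule]
      simpa [hw2def] using isWeightedHomogeneous_X ℂ w2 (Sum.inl j)
    | inr i =>
      apply Submodule.sum_mem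
      intro j _
      apply Submodule.smul_mem
      rw [mem_weightedHomogeneousSubmodule]
      simpa [hw2def] using isWeightedHomogeneous_X ℂ w2 (Sum.inr j)
  have key1 : IsWeightedHomogeneous w1 (webPullback N M P) (d+k) :=
    aux_isWH_aeval w1 w1 f hf1 P (d+k) hP1
  have key2 : IsWeightedHomogeneous w2 (webPullback N M P) k :=
    aux_isWH_aeval w2 w2 f hf2 P k hP2
  intro m hm
  constructor
  · rw [← aux_weight_inl N m, ← hw1def]
    exact key1 (mem_support_iff.mp hm)
  · rw [← aux_weight_inr N m, ← hw2def]
    exact key2 (mem_support_iff.mp hm)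

/-- Coefficient polynomials of a bihomogeneous polynomial are homogeneous. -/
lemma webCoeff_isHomogeneous (N d k : ℕ) (P : MvPolynomial (Fin (N+1) ⊕ Fin (N+1)) ℂ)
    (hbihom : ∀ m ∈ P.support,
      (∑ i, m (Sum.inl i)) = d + k ∧ (∑ i, m (Sum.inr i)) = k)
    (I : Fin (N+1) → ℕ) :
    (webCoeff N P I).IsHomogeneous (d+k) := by
  intro n hn
  rw [aux_coeff_webCoeff] at hn
  have hm := (hbihom _ (mem_support_iff.mpr hn)).1
  rw [aux_weight_one]
  simpa using hm

/-- If all degree-`k` coefficients vanish, a bihomogeneous polynomial is zero. -/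
lemma eq_zero_of_webCoeff_zero (N d k : ℕ) (Q : MvPolynomial (Fin (N+1) ⊕ Fin (N+1)) ℂ)
    (hbihom : ∀ m ∈ Q.support,
      (∑ i, m (Sum.inl i)) = d + k ∧ (∑ i, m (Sum.inr i)) = k)
    (h : ∀ J : Fin (N+1) → ℕ, (∑ i, J i) = k → webCoeff N Q J = 0) : Q = 0 := by
  by_contra hQ
  obtain ⟨m, hm⟩ := ne_zero_iff.mp hQ
  have hk := (hbihom m (mem_support_iff.mpr hm)).2
  have h0 := h (fun i => m (Sum.inr i)) hk
  have := aux_coeff_webCoeff N Q (Finsupp.equivFunOnFinite.symm fun i => m (Sum.inl i))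
    (fun i => m (Sum.inr i))
  rw [h0, coeff_zero, aux_sumElim_parts] at this
  exact hm this.symm

lemma webCoeff_smul (N : ℕ) (P : MvPolynomial (Fin (N+1) ⊕ Fin (N+1)) ℂ)
    (I : Fin (N+1) → ℕ) (lam : ℂ) :
    webCoeff N (lam • P) I = lam • webCoeff N P I := by
  unfold webCoeff
  rw [map_smul, map_smul, coeff_smul]

/-- Divisor of two equal-degree homogeneous polynomials is constant. -/
lemma aux_eq_C_of_homog_mul (N D : ℕ) (A B c : MvPolynomial (Fin (N+1)) ℂ)
    (hA : A.IsHomogeneous D) (hA0 : A ≠ 0) (hB : B.IsHomogeneous D)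
    (hBc : B = A * c) : c = C (MvPolynomial.coeff 0 c) := by
  have key : ∀ e, e ≠ 0 → homogeneousComponent e c = 0 := by
    intro e he
    by_cases hc : e ≤ c.totalDegree
    · have h0 : homogeneousComponent (D+e) B = 0 := by
        rw [homogeneousComponent_of_mem ((mem_homogeneousSubmodule _ _).mpr hB), if_neg]
        omega
      have h1 : homogeneousComponent (D+e) (A * ∑ e' ∈ Finset.range (c.totalDegree + 1),
          homogeneousComponent e' c) = A * homogeneousComponent e c := by
        rw [Finset.mul_sum, map_sum]
        rw [Finset.sum_eq_single e]
        · rw [homogeneousComponent_of_mem ((mem_homogeneousSubmodule _ _).mpr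
            (hA.mul (homogeneousComponent_isHomogeneous e c))), if_pos rfl]
        · intro e' _ he'
          rw [homogeneousComponent_of_mem ((mem_homogeneousSubmodule _ _).mpr
            (hA.mul (homogeneousComponent_isHomogeneous e' c))), if_neg]
          omega
        · intro hmem
          exact absurd (Finset.mem_range.mpr (by omega)) hmem
      rw [sum_homogeneousComponent] at h1
      rw [← hBc, h0] at h1
      rcases mul_eq_zero.mp h1.symm with h | h
      · exact absurd h hA0
      · exact h
    · exact homogeneousComponent_eq_zero e c (show c.totalDegree < e by omega)
  have hsum : ∑ e ∈ Finset.range (c.totalDegree + 1), homogeneousComponent e c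
      = homogeneousComponent 0 c := by
    apply Finset.sum_eq_single 0
    · intro e _ he; exact key e he
    · intro h; exact absurd (Finset.mem_range.mpr (by omega)) h
  conv_lhs => rw [← sum_homogeneousComponent c]
  rw [hsum, homogeneousComponent_zero]

/-- Let `P` encode a `k`-web of degree `d` on `ℙ^N` (nonzero, bihomogeneous of bidegree
`(d+k, k)`, coefficients `A_I` with no common nonconstant factor). An invertible matrix `M`
preserves the web (i.e. `M•P = λ • P` for some `λ ∈ ℂˣ`) if and only if
`A_I · B_J = A_J · B_I` for all exponent vectors `I, J` of total degree `k`, where `B_I` is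
the coefficient of `(dx)^I` in the pullback `M•P`. -/
theorem preserves_web_iff_cross_products (N k d : ℕ) (hN : 2 ≤ N) (hk : 1 ≤ k)
    (P : MvPolynomial (Fin (N+1) ⊕ Fin (N+1)) ℂ) (hP : P ≠ 0)
    (hbihom : ∀ m ∈ P.support,
      (∑ i, m (Sum.inl i)) = d + k ∧ (∑ i, m (Sum.inr i)) = k)
    (hgcd : ∀ q : MvPolynomial (Fin (N+1)) ℂ,
      (∀ I : Fin (N+1) → ℕ, (∑ i, I i) = k → q ∣ webCoeff N P I) → IsUnit q) :
    ∀ M : GL (Fin (N+1)) ℂ,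
      (∃ lam : ℂˣ, webPullback N (M : Matrix (Fin (N+1)) (Fin (N+1)) ℂ) P = (lam : ℂ) • P) ↔
      (∀ I J : Fin (N+1) → ℕ, (∑ i, I i) = k → (∑ i, J i) = k →
        webCoeff N P I * webCoeff N (webPullback N (M : Matrix (Fin (N+1)) (Fin (N+1)) ℂ) P) J
          = webCoeff N P J * webCoeff N (webPullback N (M : Matrix (Fin (N+1)) (Fin (N+1)) ℂ) P) I) := by
  intro M
  set Mm : Matrix (Fin (N+1)) (Fin (N+1)) ℂ := (M : Matrix (Fin (N+1)) (Fin (N+1)) ℂ) with hMm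
  constructor
  · rintro ⟨lam, hlam⟩ I J hI hJ
    rw [hlam, webCoeff_smul, webCoeff_smul, smul_eq_C_mul, smul_eq_C_mul]
    ring
  · intro h2
    -- the pullback is nonzero
    have hpull_ne : webPullback N Mm P ≠ 0 := by
      intro h0
      have hcomp : webPullback N ((M⁻¹ : GL (Fin (N+1)) ℂ) : Matrix (Fin (N+1)) (Fin (N+1)) ℂ)
          (webPullback N Mm P) = P := by
        rw [webPullback_comp]
        have : Mm * ((M⁻¹ : GL (Fin (N+1)) ℂ) : Matrix (Fin (N+1)) (Fin (N+1)) ℂ) = 1 := by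
          exact_mod_cast M.mul_inv
        rw [this, webPullback_one]
      rw [h0] at hcomp
      apply hP
      rw [← hcomp]
      unfold webPullback
      exact map_zero _
    have hpullsupp := webPullback_support N d k Mm P hbihom
    -- pick a nonzero coefficient A_{I0}
    obtain ⟨m0, hm0⟩ := ne_zero_iff.mp hP
    set I0 : Fin (N+1) → ℕ := fun i => m0 (Sum.inr i) with hI0def
    have hI0 : (∑ i, I0 i) = k := (hbihom m0 (mem_support_iff.mpr hm0)).2
    have hA0 : webCoeff N P I0 ≠ 0 := by
      intro h0
      have := aux_coeff_webCoeff N P (Finsupp.equivFunOnFinite.symm fun i => m0 (Sum.inl i)) I0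
      rw [h0, coeff_zero, hI0def, aux_sumElim_parts] at this
      exact hm0 this.symm
    -- GCD argument: A_{I0} divides B_{I0}
    letI : GCDMonoid (MvPolynomial (Fin (N+1)) ℂ) :=
      UniqueFactorizationMonoid.toGCDMonoid _
    set A : (Fin (N+1) → ℕ) → MvPolynomial (Fin (N+1)) ℂ := fun I => webCoeff N P I with hAdef
    set B : (Fin (N+1) → ℕ) → MvPolynomial (Fin (N+1)) ℂ :=
      fun I => webCoeff N (webPullback N Mm P) I with hBdef
    obtain ⟨a', b', ha, hb, hu⟩ := extract_gcd (A I0) (B I0)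
    set g : MvPolynomial (Fin (N+1)) ℂ := gcd (A I0) (B I0) with hgdef
    have hg0 : g ≠ 0 := by
      intro h0; rw [h0, zero_mul] at ha; exact hA0 ha
    have hrel : IsRelPrime a' b' := fun z hz1 hz2 =>
      isUnit_of_dvd_unit (dvd_gcd hz1 hz2) hu
    have ha'unit : IsUnit a' := by
      apply hgcd
      intro J hJ
      have hJ2 := h2 I0 J hI0 hJ
      have hcancel : a' * B J = A J * b' := by
        apply mul_left_cancel₀ hg0
        calc g * (a' * B J) = (A I0) * B J := by rw [← mul_assoc, ← ha]
          _ = A J * B I0 := hJ2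
          _ = g * (A J * b') := by rw [hb]; ring
      exact hrel.dvd_of_dvd_mul_right ⟨B J, hcancel.symm⟩
    obtain ⟨u, hu'⟩ := ha'unit
    -- B_{I0} = A_{I0} * c
    set c : MvPolynomial (Fin (N+1)) ℂ := (↑u⁻¹ : MvPolynomial (Fin (N+1)) ℂ) * b' with hcdef
    have hBI0 : B I0 = A I0 * c := by
      rw [hb, ha, ← hu', hcdef]
      calc g * b'
          = g * ((↑u * ↑u⁻¹ : MvPolynomial (Fin (N+1)) ℂ) * b') := by
            rw [Units.mul_inv, one_mul]
        _ = g * ↑u * (↑u⁻¹ * b') := by ring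
    -- B_J = A_J * c for all J of degree k
    have hBJ : ∀ J : Fin (N+1) → ℕ, (∑ i, J i) = k → B J = A J * c := by
      intro J hJ
      apply mul_left_cancel₀ hA0
      calc A I0 * B J = A J * B I0 := h2 I0 J hI0 hJ
        _ = A I0 * (A J * c) := by rw [hBI0]; ring
    -- c is a nonzero constant
    have hAhom : (A I0).IsHomogeneous (d+k) := webCoeff_isHomogeneous N d k P hbihom I0
    have hBhom : (B I0).IsHomogeneous (d+k) :=
      webCoeff_isHomogeneous N d k (webPullback N Mm P) hpullsupp I0
    have hcC : c = C (MvPolynomial.coeff 0 c) :=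
      aux_eq_C_of_homog_mul N (d+k) (A I0) (B I0) c hAhom hA0 hBhom hBI0
    have hcne : c ≠ 0 := by
      intro h0
      apply hpull_ne
      apply eq_zero_of_webCoeff_zero N d k _ hpullsupp
      intro J hJ
      show B J = 0
      rw [hBJ J hJ, h0, mul_zero]
    set lam : ℂ := MvPolynomial.coeff 0 c with hlamdef
    have hlamne : lam ≠ 0 := by
      intro h0
      apply hcne
      rw [hcC, h0, map_zero]
    refine ⟨Units.mk0 lam hlamne, ?_⟩
    ext m
    rw [coeff_smul, smul_eq_mul]
    -- reduce to coefficients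
    have hsplit := aux_sumElim_parts N m
    set n' : Fin (N+1) →₀ ℕ := Finsupp.equivFunOnFinite.symm fun i => m (Sum.inl i) with hn'def
    set J : Fin (N+1) → ℕ := fun i => m (Sum.inr i) with hJdef
    have e1 : MvPolynomial.coeff m (webPullback N Mm P) = MvPolynomial.coeff n' (B J) := by
      rw [hBdef]
      rw [aux_coeff_webCoeff, hsplit]
    have e2 : MvPolynomial.coeff m P = MvPolynomial.coeff n' (A J) := by
      rw [hAdef]
      rw [aux_coeff_webCoeff, hsplit]
    rw [e1, e2]
    by_cases hdeg : (∑ i, J i) = k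
    · rw [hBJ J hdeg, hcC]
      have hmc : A J * C lam = C lam * A J := mul_comm _ _
      rw [hmc, coeff_C_mul, Units.val_mk0]
    · have hz1 : MvPolynomial.coeff n' (B J) = 0 := by
        rw [hBdef, aux_coeff_webCoeff, hsplit]
        by_contra hne
        exact hdeg ((hpullsupp m (mem_support_iff.mpr hne)).2)
      have hz2 : MvPolynomial.coeff n' (A J) = 0 := by
        rw [hAdef, aux_coeff_webCoeff, hsplit]
        by_contra hne
        exact hdeg ((hbihom m (mem_support_iff.mpr hne)).2)
      rw [hz1, hz2, mul_zero]
end
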